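/- For all integers 0 ≤ j ≤ k and every unipotent upper-triangular n×n matrix g over F: Ψ^j(g) · Ψ^k(g) = Σ_{m=0}^{j} q^{(j−m)(j−m−1)/2} · [k+m choose k+m−j]_q · [j choose m]_q · Ψ^{k+m}(g), where the Gaussian binomials are evaluated at q = |F|. -/

import Mathlib

open Finset Polynomial

variable {F : Type*} [Field F] [Fintype F] [DecidableEq F]

/-- The strictly lower-triangular part of a matrix. -/
def lowerPart {n : ℕ} (x : Matrix (Fin n) (Fin n) F) : Matrix (Fin n) (Fin n) F :=
  Matrix.of fun i j => if j < i then x i j else 0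

open Classical in
/-- `Ψ_K(g)`: the sum of `θ(tr((g − 1) v))` over all strictly lower-triangular `v`
whose nonzero entries lie in columns indexed by `K` and with `lower(g v) = v`. -/
noncomputable def Psi {n : ℕ} (θ : F → ℂ) (K : Finset (Fin n))
    (g : Matrix (Fin n) (Fin n) F) : ℂ :=
  ∑ v ∈ univ.filter (fun v : Matrix (Fin n) (Fin n) F =>
      (∀ i j, ¬ j < i → v i j = 0) ∧ (∀ i j, v i j ≠ 0 → j ∈ K) ∧ lowerPart (g * v) = v),
    θ (Matrix.trace ((g - 1) * v))

/-- `Ψ^k(g) = ∑_{K ⊆ N, |K| = k} Ψ_K(g)`. -/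
noncomputable def Psik {n : ℕ} (θ : F → ℂ) (k : ℕ) (g : Matrix (Fin n) (Fin n) F) : ℂ :=
  ∑ K ∈ (univ : Finset (Fin n)).powersetCard k, Psi θ K g

/-- The Gaussian binomial coefficient `[n choose k]_q` as a polynomial in `q`. -/
noncomputable def gaussBinom : ℕ → ℕ → Polynomial ℤ
  | _, 0 => 1
  | 0, _ + 1 => 0
  | n + 1, k + 1 => gaussBinom n k + X ^ (k + 1) * gaussBinom n (k + 1)

section QComb

variable (N : ℕ)

noncomputable def Gc (n k : ℕ) : ℂ := (((gaussBinom n k).eval (N : ℤ) : ℤ) : ℂ)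

@[simp] lemma Gc_zero_right (n : ℕ) : Gc N n 0 = 1 := by simp [Gc, gaussBinom]

@[simp] lemma Gc_zero_left (k : ℕ) : Gc N 0 (k+1) = 0 := by simp [Gc, gaussBinom]

lemma Gc_succ (n k : ℕ) :
    Gc N (n+1) (k+1) = Gc N n k + (N:ℂ)^(k+1) * Gc N n (k+1) := by
  simp [Gc, gaussBinom]

lemma Gc_eq_zero_of_lt : ∀ n k : ℕ, n < k → Gc N n k = 0 := by
  intro n
  induction n with
  | zero => intro k hk; match k, hk with
    | k+1, _ => simp
  | succ n ih =>
    intro k hk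
    match k, hk with
    | k+1, hk =>
      rw [Gc_succ, ih k (by omega), ih (k+1) (by omega)]
      ring

@[simp] lemma Gc_self : ∀ n : ℕ, Gc N n n = 1 := by
  intro n
  induction n with
  | zero => simp
  | succ n ih => rw [Gc_succ, ih, Gc_eq_zero_of_lt N n (n+1) (by omega)]; ring

lemma E3_main : ∀ j : ℕ,
    (∀ m : ℕ, ((N:ℂ)^(m+1) - 1) * Gc N j (m+1) = ((N:ℂ)^(j-m) - 1) * Gc N j m)
    ∧ (∀ m : ℕ, ((N:ℂ)^(j+1-m) - 1) * Gc N (j+1) m = ((N:ℂ)^(j+1) - 1) * Gc N j m) := by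
  intro j
  induction j with
  | zero =>
    constructor
    · intro m
      match m with
      | 0 => simp
      | m+1 => simp [Gc_eq_zero_of_lt N 0 (m+1) (by omega)]
    · intro m
      match m with
      | 0 => simp
      | 1 => simp
      | m+2 => simp [Gc_eq_zero_of_lt N 1 (m+2) (by omega),
                     Gc_eq_zero_of_lt N 0 (m+2) (by omega)]
  | succ j ih =>
    obtain ⟨ih3, ih3'⟩ := ih
    have h3succ : ∀ m : ℕ, ((N:ℂ)^(m+1) - 1) * Gc N (j+1) (m+1)
        = ((N:ℂ)^(j+1-m) - 1) * Gc N (j+1) m := by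
      intro m
      by_cases hm : m ≤ j
      · have hpow : (N:ℂ)^(m+1) * (N:ℂ)^(j-m) = (N:ℂ)^(j+1) := by
          rw [← pow_add]; congr 1; omega
        rw [Gc_succ]
        calc ((N:ℂ)^(m+1) - 1) * (Gc N j m + (N:ℂ)^(m+1) * Gc N j (m+1))
            = ((N:ℂ)^(m+1) - 1) * Gc N j m
              + (N:ℂ)^(m+1) * (((N:ℂ)^(m+1) - 1) * Gc N j (m+1)) := by ring
          _ = ((N:ℂ)^(m+1) - 1) * Gc N j m
              + (N:ℂ)^(m+1) * (((N:ℂ)^(j-m) - 1) * Gc N j m) := by rw [ih3 m]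
          _ = ((N:ℂ)^(j+1) - 1) * Gc N j m := by
              rw [show (N:ℂ)^(m+1) * (((N:ℂ)^(j-m) - 1) * Gc N j m)
                  = ((N:ℂ)^(m+1) * (N:ℂ)^(j-m)) * Gc N j m - (N:ℂ)^(m+1) * Gc N j m by ring,
                hpow]
              ring
          _ = ((N:ℂ)^(j+1-m) - 1) * Gc N (j+1) m := (ih3' m).symm
      · by_cases hm2 : m = j + 1
        · subst hm2
          rw [Gc_eq_zero_of_lt N (j+1) (j+1+1) (by omega), Nat.sub_self]
          simp
        · rw [Gc_eq_zero_of_lt N (j+1) (m+1) (by omega), Gc_eq_zero_of_lt N (j+1) m (by omega)]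
          ring
    refine ⟨h3succ, ?_⟩
    intro m
    induction m with
    | zero => simp
    | succ m _ =>
      by_cases hm : m ≤ j + 1
      · have hpow : (N:ℂ)^(m+1) * (N:ℂ)^(j+1-m) = (N:ℂ)^(j+2) := by
          rw [← pow_add]; congr 1; omega
        have hexp : j + 1 + 1 - (m+1) = j + 1 - m := by omega
        rw [hexp, Gc_succ]
        calc ((N:ℂ)^(j+1-m) - 1) * (Gc N (j+1) m + (N:ℂ)^(m+1) * Gc N (j+1) (m+1))
            = ((N:ℂ)^(j+1-m) - 1) * Gc N (j+1) m
              + (N:ℂ)^(m+1) * (((N:ℂ)^(j+1-m) - 1) * Gc N (j+1) (m+1)) := by ring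
          _ = ((N:ℂ)^(m+1) - 1) * Gc N (j+1) (m+1)
              + (N:ℂ)^(m+1) * (((N:ℂ)^(j+1-m) - 1) * Gc N (j+1) (m+1)) := by rw [h3succ m]
          _ = ((N:ℂ)^(m+1) * (N:ℂ)^(j+1-m) - 1) * Gc N (j+1) (m+1) := by ring
          _ = ((N:ℂ)^(j+1+1) - 1) * Gc N (j+1) (m+1) := by rw [hpow]
      · rw [Gc_eq_zero_of_lt N (j+2) (m+1) (by omega), Gc_eq_zero_of_lt N (j+1) (m+1) (by omega)]
        ring

lemma E3nat (j m : ℕ) :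
    ((N:ℂ)^(m+1) - 1) * Gc N j (m+1) = ((N:ℂ)^(j-m) - 1) * Gc N j m :=
  (E3_main N j).1 m

lemma E2nat (j m : ℕ) :
    Gc N (j+1) (m+1) = Gc N j (m+1) + (N:ℂ)^(j-m) * Gc N j m := by
  rw [Gc_succ]
  linear_combination (E3nat N j m)

lemma Gc_compl : ∀ n k : ℕ, k ≤ n → Gc N n (n-k) = Gc N n k := by
  intro n
  induction n with
  | zero => intro k hk; interval_cases k; simp
  | succ n ih =>
    intro k hk
    match k with
    | 0 => simp [Nat.sub_zero]
    | k+1 =>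
      by_cases hkn : k = n
      · subst hkn; simp
      · have hk' : k + 1 ≤ n := by omega
        have h1 : n + 1 - (k+1) = (n - (k+1)) + 1 := by omega
        have h3 : Gc N n (n - (k+1)) = Gc N n (k+1) := ih (k+1) hk'
        have h4 : Gc N n (n - k) = Gc N n k := ih k (by omega)
        have h5 : n - (k+1) + 1 = n - k := by omega
        rw [h1, Gc_succ, Gc_succ, h3, h5, h4]
        linear_combination -(E3nat N n k)

/-- The coefficient `q^{m(k-j)+m²} [k+m, j]_q [j, m]_q`. -/
noncomputable def Cc (m j k : ℕ) : ℂ :=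
  (N:ℂ) ^ ((m:ℤ) * ((k:ℤ) - (j:ℤ)) + (m:ℤ)^2) * Gc N (k+m) j * Gc N j m

lemma pow_mul_Cc (hq : (N:ℂ) ≠ 0) (w e m j k : ℕ)
    (h : (w:ℤ) + ((m:ℤ) * ((k:ℤ) - (j:ℤ)) + (m:ℤ)^2) = (e:ℤ)) :
    (N:ℂ)^w * Cc N m j k = (N:ℂ)^e * Gc N (k+m) j * Gc N j m := by
  rw [Cc, ← mul_assoc, ← mul_assoc, ← zpow_natCast (N:ℂ) w, ← zpow_natCast (N:ℂ) e,
    ← zpow_add₀ hq, h]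

lemma ii_scaled (J K m : ℕ) (hm : m ≤ J) :
    (N:ℂ)^(m*(K+1)+m*m+(K+1)+2*m+1) * Gc N (K+1+m+1) (J+1) * Gc N (J+1) (m+1)
      + (N:ℂ)^(m*(K+1)+m*m+(J+1)+(K+1)+m) * Gc N (K+1+m) (J+1) * Gc N (J+1) m
    = (N:ℂ)^(m*(K+1)+m*m+(K+1)+2*m+1) * Gc N (K+1+m) J * Gc N J (m+1)
      + (N:ℂ)^(m*(K+1)+m*m+(J+1)+(K+1)+m) * Gc N (K+1+m) (J+1) * Gc N (J+1) (m+1)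
      + (N:ℂ)^(m*(K+1)+m*m+(J+1)+(K+1)+m) * Gc N (K+1+m) J * Gc N J m
      + (N:ℂ)^(m*(K+1)+m*m+2*(J+1)+(K+1)) * Gc N (K+1+m) (J+1) * Gc N (J+1) m := by
  have h1 : Gc N (K+1+m+1) (J+1)
      = Gc N (K+1+m) J + (N:ℂ)^(J+1) * Gc N (K+1+m) (J+1) := Gc_succ N (K+1+m) J
  have h2 : Gc N (J+1) (m+1) = Gc N J (m+1) + (N:ℂ)^(J-m) * Gc N J m := E2nat N J m
  have h3 : ((N:ℂ)^(m+1) - 1) * (Gc N J (m+1) + (N:ℂ)^(J-m) * Gc N J m)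
      = ((N:ℂ) * (N:ℂ)^(J-m) - 1) * Gc N (J+1) m := by
    have h := E3nat N (J+1) m
    rw [E2nat N J m, show J + 1 - m = (J-m)+1 by omega, pow_succ' (N:ℂ) (J-m)] at h
    exact h
  have h4 : (N:ℂ)^(J-m) * (N:ℂ)^(m+1) = (N:ℂ)^(J+1) := by
    rw [← pow_add]; congr 1; omega
  rw [h1, h2]
  linear_combination
    ((N:ℂ)^(m*(K+1)+m*m+(K+1)+m) * Gc N (K+1+m) J * Gc N J m
      + (N:ℂ)^(m*(K+1)+m*m+(J+1)+(K+1)) * Gc N (K+1+m) (J+1) * Gc N (J+1) m) * h4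
    + ((N:ℂ)^(m*(K+1)+m*m+(J+1)+(K+1)+m) * Gc N (K+1+m) (J+1)) * h3

lemma Cc_eq_zero (m j k : ℕ) (h : j < m) : Cc N m j k = 0 := by
  rw [Cc, Gc_eq_zero_of_lt N j m h, mul_zero]

@[simp] lemma Cc_zero (j k : ℕ) : Cc N 0 j k = Gc N k j := by
  simp [Cc]

lemma ii' (hq : (N:ℂ) ≠ 0) (J K m : ℕ) (hm : m ≤ J) :
    Cc N (m+1) (J+1) (K+1) + (N:ℂ)^(K+m+1) * Cc N m (J+1) (K+1)
    = Cc N (m+1) J K + (N:ℂ)^(J+1) * Cc N (m+1) (J+1) K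
      + (N:ℂ)^(K+1) * Cc N m J (K+1) + ((N:ℂ)^(J+1) * (N:ℂ)^(K+1)) * Cc N m (J+1) (K+1) := by
  apply mul_left_cancel₀ (pow_ne_zero ((m+1)*(J+1)) hq)
  have t1 := pow_mul_Cc N hq ((m+1)*(J+1)) (m*(K+1)+m*m+(K+1)+2*m+1) (m+1) (J+1) (K+1)
    (by push_cast; ring)
  have t2 := pow_mul_Cc N hq ((m+1)*(J+1)+(K+m+1)) (m*(K+1)+m*m+(J+1)+(K+1)+m) m (J+1) (K+1)
    (by push_cast; ring)
  have t3 := pow_mul_Cc N hq ((m+1)*(J+1)) (m*(K+1)+m*m+(K+1)+2*m+1) (m+1) J K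
    (by push_cast; ring)
  have t4 := pow_mul_Cc N hq ((m+1)*(J+1)+(J+1)) (m*(K+1)+m*m+(J+1)+(K+1)+m) (m+1) (J+1) K
    (by push_cast; ring)
  have t5 := pow_mul_Cc N hq ((m+1)*(J+1)+(K+1)) (m*(K+1)+m*m+(J+1)+(K+1)+m) m J (K+1)
    (by push_cast; ring)
  have t6 := pow_mul_Cc N hq ((m+1)*(J+1)+((J+1)+(K+1))) (m*(K+1)+m*m+2*(J+1)+(K+1)) m (J+1) (K+1)
    (by push_cast; ring)
  have hsc := ii_scaled N J K m hm
  calc (N:ℂ)^((m+1)*(J+1)) *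
        (Cc N (m+1) (J+1) (K+1) + (N:ℂ)^(K+m+1) * Cc N m (J+1) (K+1))
      = (N:ℂ)^((m+1)*(J+1)) * Cc N (m+1) (J+1) (K+1)
        + (N:ℂ)^((m+1)*(J+1)+(K+m+1)) * Cc N m (J+1) (K+1) := by
        rw [pow_add]; ring
    _ = (N:ℂ)^(m*(K+1)+m*m+(K+1)+2*m+1) * Gc N ((K+1)+(m+1)) (J+1) * Gc N (J+1) (m+1)
        + (N:ℂ)^(m*(K+1)+m*m+(J+1)+(K+1)+m) * Gc N ((K+1)+m) (J+1) * Gc N (J+1) m := by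
        rw [t1, t2]
    _ = (N:ℂ)^(m*(K+1)+m*m+(K+1)+2*m+1) * Gc N ((K+1)+m) J * Gc N J (m+1)
        + (N:ℂ)^(m*(K+1)+m*m+(J+1)+(K+1)+m) * Gc N ((K+1)+m) (J+1) * Gc N (J+1) (m+1)
        + (N:ℂ)^(m*(K+1)+m*m+(J+1)+(K+1)+m) * Gc N ((K+1)+m) J * Gc N J m
        + (N:ℂ)^(m*(K+1)+m*m+2*(J+1)+(K+1)) * Gc N ((K+1)+m) (J+1) * Gc N (J+1) m := hsc
    _ = (N:ℂ)^((m+1)*(J+1)) * Cc N (m+1) J K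
        + (N:ℂ)^((m+1)*(J+1)+(J+1)) * Cc N (m+1) (J+1) K
        + (N:ℂ)^((m+1)*(J+1)+(K+1)) * Cc N m J (K+1)
        + (N:ℂ)^((m+1)*(J+1)+((J+1)+(K+1))) * Cc N m (J+1) (K+1) := by
        rw [t3, t4, t5, t6]
        simp only [show K + (m+1) = K+1+m from by omega]
    _ = (N:ℂ)^((m+1)*(J+1)) *
        (Cc N (m+1) J K + (N:ℂ)^(J+1) * Cc N (m+1) (J+1) K
          + (N:ℂ)^(K+1) * Cc N m J (K+1)
          + ((N:ℂ)^(J+1) * (N:ℂ)^(K+1)) * Cc N m (J+1) (K+1)) := by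
        rw [pow_add, pow_add, pow_add, pow_add]; ring

lemma master_j0 (a k : ℕ) :
    Gc N a 0 * Gc N a k = ∑ m ∈ Finset.range (0+1), Cc N m 0 k * Gc N a (k+m) := by
  rw [Finset.sum_range_one]
  simp

lemma master_k0 (a j : ℕ) :
    Gc N a j * Gc N a 0 = ∑ m ∈ Finset.range (j+1), Cc N m j 0 * Gc N a (0+m) := by
  rw [Finset.sum_eq_single j]
  · rw [Cc, show ((j:ℤ) * (((0:ℕ):ℤ) - (j:ℤ)) + (j:ℤ)^2) = 0 by push_cast; ring]
    simp [Nat.zero_add]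
  · intro m hm hne
    have hlt : m < j := by
      have := Finset.mem_range.mp hm; omega
    rw [Cc, show (0+m) = m from Nat.zero_add m, Gc_eq_zero_of_lt N m j hlt]
    ring
  · intro h
    exact absurd (Finset.self_mem_range_succ j) h

lemma master (hq : (N:ℂ) ≠ 0) :
    ∀ a j k : ℕ, Gc N a j * Gc N a k = ∑ m ∈ Finset.range (j+1), Cc N m j k * Gc N a (k+m) := by
  intro a
  induction a with
  | zero =>
    intro j k
    match j with
    | 0 => exact master_j0 N 0 k
    | J+1 =>
      match k with
      | 0 => exact master_k0 N 0 (J+1)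
      | K+1 =>
        rw [Gc_zero_left, zero_mul]
        symm
        apply Finset.sum_eq_zero
        intro m _
        rw [show K+1+m = (K+m)+1 by omega, Gc_zero_left, mul_zero]
  | succ a ih =>
    intro j k
    match j with
    | 0 => exact master_j0 N (a+1) k
    | J+1 =>
      match k with
      | 0 => exact master_k0 N (a+1) (J+1)
      | K+1 =>
        -- abbreviations are inline; five canonical sums over range (J+1+1)
        have key : ∀ m ∈ Finset.range (J+1+1),
            Cc N (m+1) J K * Gc N a (K+m+1)
              + (N:ℂ)^(K+1) * (Cc N m J (K+1) * Gc N a (K+m+1))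
              + (N:ℂ)^(J+1) * (Cc N (m+1) (J+1) K * Gc N a (K+m+1))
              + (N:ℂ)^(J+1) * (N:ℂ)^(K+1) * (Cc N m (J+1) (K+1) * Gc N a (K+m+1))
            = Cc N (m+1) (J+1) (K+1) * Gc N a (K+m+1)
              + Cc N m (J+1) (K+1) * ((N:ℂ)^(K+m+1) * Gc N a (K+m+1)) := by
          intro m hm
          have hm' : m ≤ J + 1 := by
            have := Finset.mem_range.mp hm; omega
          by_cases hmJ : m ≤ J
          · have h := ii' N hq J K m hmJ
            linear_combination (Gc N a (K+m+1)) * h.symm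
          · have hmeq : m = J + 1 := by omega
            subst hmeq
            rw [Cc_eq_zero N (J+1+1) J K (by omega), Cc_eq_zero N (J+1) J (K+1) (by omega),
              Cc_eq_zero N (J+1+1) (J+1) K (by omega),
              Cc_eq_zero N (J+1+1) (J+1) (K+1) (by omega)]
            ring
        -- hA
        have hA : Gc N a J * Gc N a K
            = (∑ m ∈ Finset.range (J+1+1), Cc N (m+1) J K * Gc N a (K+m+1))
              + Cc N 0 J K * Gc N a (K+0) := by
          rw [ih J K, Finset.sum_range_succ']
          congr 1
          rw [Finset.sum_range_succ, Finset.sum_range_succ,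
            Cc_eq_zero N (J+1+1) J K (by omega), zero_mul, add_zero,
            Cc_eq_zero N (J+1) J K (by omega), zero_mul, add_zero]
          rfl
        have hB : Gc N a J * Gc N a (K+1)
            = ∑ m ∈ Finset.range (J+1+1), Cc N m J (K+1) * Gc N a (K+m+1) := by
          rw [ih J (K+1),
            Finset.sum_range_succ (fun m => Cc N m J (K+1) * Gc N a (K+m+1)) (J+1),
            Cc_eq_zero N (J+1) J (K+1) (by omega), zero_mul, add_zero]
          apply Finset.sum_congr rfl
          intro m _
          rw [show K+1+m = K+m+1 by omega]
        have hC : Gc N a (J+1) * Gc N a K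
            = (∑ m ∈ Finset.range (J+1+1), Cc N (m+1) (J+1) K * Gc N a (K+m+1))
              + Cc N 0 (J+1) K * Gc N a (K+0) := by
          rw [ih (J+1) K, Finset.sum_range_succ']
          congr 1
          rw [Finset.sum_range_succ (fun m => Cc N (m+1) (J+1) K * Gc N a (K+m+1)) (J+1),
            Cc_eq_zero N (J+1+1) (J+1) K (by omega), zero_mul, add_zero]
          rfl
        have hD : Gc N a (J+1) * Gc N a (K+1)
            = ∑ m ∈ Finset.range (J+1+1), Cc N m (J+1) (K+1) * Gc N a (K+m+1) := by
          rw [ih (J+1) (K+1)]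
          apply Finset.sum_congr rfl
          intro m _
          rw [show K+1+m = K+m+1 by omega]
        have hRHS : (∑ m ∈ Finset.range (J+1+1), Cc N m (J+1) (K+1) * Gc N (a+1) (K+1+m))
            = ((∑ m ∈ Finset.range (J+1+1), Cc N (m+1) (J+1) (K+1) * Gc N a (K+m+1))
                + Cc N 0 (J+1) (K+1) * Gc N a (K+0))
              + ∑ m ∈ Finset.range (J+1+1),
                  Cc N m (J+1) (K+1) * ((N:ℂ)^(K+m+1) * Gc N a (K+m+1)) := by
          rw [show (∑ m ∈ Finset.range (J+1+1), Cc N m (J+1) (K+1) * Gc N (a+1) (K+1+m))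
              = ∑ m ∈ Finset.range (J+1+1),
                  (Cc N m (J+1) (K+1) * Gc N a (K+m)
                    + Cc N m (J+1) (K+1) * ((N:ℂ)^(K+m+1) * Gc N a (K+m+1)))
            from Finset.sum_congr rfl fun m _ => by
              rw [show K+1+m = (K+m)+1 by omega, Gc_succ]; ring]
          rw [Finset.sum_add_distrib]
          congr 1
          rw [Finset.sum_range_succ']
          congr 1
          rw [Finset.sum_range_succ
              (fun m => Cc N (m+1) (J+1) (K+1) * Gc N a (K+m+1)) (J+1),
            Cc_eq_zero N (J+1+1) (J+1) (K+1) (by omega), zero_mul, add_zero]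
          rfl
        have hkey := Finset.sum_congr rfl key
        rw [Finset.sum_add_distrib, Finset.sum_add_distrib, Finset.sum_add_distrib,
          Finset.sum_add_distrib, ← Finset.mul_sum, ← Finset.mul_sum, ← Finset.mul_sum] at hkey
        have hbound : Cc N 0 (J+1) (K+1) = Cc N 0 J K + (N:ℂ)^(J+1) * Cc N 0 (J+1) K := by
          simp only [Cc_zero]
          exact Gc_succ N K J
        calc Gc N (a+1) (J+1) * Gc N (a+1) (K+1)
            = (Gc N a J + (N:ℂ)^(J+1) * Gc N a (J+1))
              * (Gc N a K + (N:ℂ)^(K+1) * Gc N a (K+1)) := by rw [Gc_succ, Gc_succ]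
          _ = ∑ m ∈ Finset.range (J+1+1), Cc N m (J+1) (K+1) * Gc N (a+1) (K+1+m) := by
              rw [hRHS]
              linear_combination hA + (N:ℂ)^(K+1) * hB + (N:ℂ)^(J+1) * hC
                + (N:ℂ)^(J+1) * (N:ℂ)^(K+1) * hD + hkey
                - (Gc N a (K+0)) * hbound

/-- triangle number `t(t-1)/2`. -/
def tr (t : ℕ) : ℕ := t*(t-1)/2

lemma tr_succ (t : ℕ) : tr (t+1) = tr t + t := by
  unfold tr
  rw [← Nat.choose_two_right (t+1), ← Nat.choose_two_right t]
  have h2 : (t+1).choose 2 = t.choose 1 + t.choose 2 := Nat.choose_succ_succ t 1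
  rw [Nat.choose_one_right] at h2
  omega

lemma weight_sum {α : Type*} [LinearOrder α] [DecidableEq α] (A : Finset α) :
    ∀ t : ℕ, ∑ K ∈ A.powersetCard t, ∏ c ∈ K, (N:ℂ)^((A.filter (fun x => c < x)).card)
      = (N:ℂ)^(tr t) * Gc N A.card t := by
  induction A using Finset.strongInduction with
  | _ A ih =>
  intro t
  rcases A.eq_empty_or_nonempty with rfl | hne
  · match t with
    | 0 => simp [tr]
    | t+1 =>
      rw [Finset.powersetCard_eq_empty.mpr (by simp : (∅ : Finset α).card < t+1)]
      simp [Gc_eq_zero_of_lt N 0 (t+1) (by omega)]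
  · match t with
    | 0 => simp [tr]
    | t+1 =>
      set c0 := A.min' hne with hc0def
      have hc0 : c0 ∈ A := A.min'_mem hne
      have hAeq : insert c0 (A.erase c0) = A := Finset.insert_erase hc0
      have hno : c0 ∉ A.erase c0 := Finset.notMem_erase c0 A
      have hss : A.erase c0 ⊂ A := Finset.erase_ssubset hc0
      -- weights of elements of A.erase c0 are the same w.r.t. A and A.erase c0
      have hw : ∀ c ∈ A.erase c0,
          (A.filter (fun x => c < x)).card = ((A.erase c0).filter (fun x => c < x)).card := by
        intro c hc
        have hnotlt : ¬ c < c0 := not_lt.mpr (A.min'_le c (Finset.mem_of_mem_erase hc))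
        conv_lhs => rw [← hAeq, Finset.filter_insert, if_neg hnotlt]
      -- weight of c0
      have hwc0 : (A.filter (fun x => c0 < x)).card = (A.erase c0).card := by
        congr 1
        ext x
        simp only [Finset.mem_filter, Finset.mem_erase]
        constructor
        · intro ⟨hx, hlt⟩; exact ⟨ne_of_gt hlt, hx⟩
        · intro ⟨hne', hx⟩
          exact ⟨hx, lt_of_le_of_ne (A.min'_le x hx) (Ne.symm hne')⟩
      rw [← hAeq, Finset.powersetCard_succ_insert hno, Finset.sum_union, Finset.sum_image]
      · -- main computation
        have h1 : ∑ K ∈ (A.erase c0).powersetCard (t+1),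
              ∏ c ∈ K, (N:ℂ)^(((insert c0 (A.erase c0)).filter (fun x => c < x)).card)
            = (N:ℂ)^(tr (t+1)) * Gc N (A.erase c0).card (t+1) := by
          rw [← ih (A.erase c0) hss (t+1)]
          apply Finset.sum_congr rfl
          intro K hK
          apply Finset.prod_congr rfl
          intro c hc
          have hcK : c ∈ A.erase c0 :=
            (Finset.mem_powersetCard.mp hK).1 hc
          rw [hAeq, hw c hcK]
        have h2 : ∑ K ∈ (A.erase c0).powersetCard t,
              ∏ c ∈ insert c0 K, (N:ℂ)^(((insert c0 (A.erase c0)).filter (fun x => c < x)).card)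
            = (N:ℂ)^((A.erase c0).card) * ((N:ℂ)^(tr t) * Gc N (A.erase c0).card t) := by
          rw [← ih (A.erase c0) hss t, Finset.mul_sum]
          apply Finset.sum_congr rfl
          intro K hK
          have hKsub : K ⊆ A.erase c0 := (Finset.mem_powersetCard.mp hK).1
          have hc0K : c0 ∉ K := fun h => hno (hKsub h)
          rw [Finset.prod_insert hc0K, hAeq, hwc0]
          congr 1
          apply Finset.prod_congr rfl
          intro c hc
          rw [hw c (hKsub hc)]
        rw [h1, h2]
        -- now the Gauss recursion
        have hcard : (insert c0 (A.erase c0)).card = (A.erase c0).card + 1 :=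
          Finset.card_insert_of_notMem hno
        rw [hcard]
        set a' := (A.erase c0).card
        rw [E2nat N a' t, tr_succ]
        by_cases ht : t ≤ a'
        · rw [mul_add]
          congr 1
          rw [← mul_assoc, ← mul_assoc, ← pow_add, ← pow_add,
            show a' + tr t = tr t + t + (a'-t) from by omega]
        · rw [Gc_eq_zero_of_lt N a' t (by omega), Gc_eq_zero_of_lt N a' (t+1) (by omega)]
          ring
      · -- injectivity of insert c0
        intro K1 h1 K2 h2 heq
        have e1 : c0 ∉ K1 := fun h => hno ((Finset.mem_powersetCard.mp h1).1 h)
        have e2 : c0 ∉ K2 := fun h => hno ((Finset.mem_powersetCard.mp h2).1 h)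
        rw [← Finset.erase_insert e1, ← Finset.erase_insert e2, heq]
      · -- disjointness
        rw [Finset.disjoint_left]
        intro K hK1 hK2
        have : K ⊆ A.erase c0 := (Finset.mem_powersetCard.mp hK1).1
        obtain ⟨K', hK', rfl⟩ := Finset.mem_image.mp hK2
        exact hno (this (Finset.mem_insert_self c0 K'))

lemma trz : ∀ t : ℕ, ((tr t : ℕ) : ℤ) * 2 = (t:ℤ) * ((t:ℤ) - 1) := by
  intro t
  induction t with
  | zero => simp [tr]
  | succ t ih =>
    rw [tr_succ]
    push_cast
    push_cast at ih
    linear_combination ih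

lemma final_q (hq : (N:ℂ) ≠ 0) (a j k : ℕ) (hjk : j ≤ k) :
    ((N:ℂ)^(tr j) * Gc N a j) * ((N:ℂ)^(tr k) * Gc N a k)
      = ∑ m ∈ Finset.range (j+1),
          (N:ℂ)^(tr (j-m)) * Gc N (k+m) (k+m-j) * Gc N j m
            * ((N:ℂ)^(tr (k+m)) * Gc N a (k+m)) := by
  have hmas := master N hq a j k
  calc ((N:ℂ)^(tr j) * Gc N a j) * ((N:ℂ)^(tr k) * Gc N a k)
      = (N:ℂ)^(tr j) * (N:ℂ)^(tr k) * (Gc N a j * Gc N a k) := by ring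
    _ = (N:ℂ)^(tr j) * (N:ℂ)^(tr k)
        * ∑ m ∈ Finset.range (j+1), Cc N m j k * Gc N a (k+m) := by rw [hmas]
    _ = ∑ m ∈ Finset.range (j+1),
          (N:ℂ)^(tr (j-m)) * Gc N (k+m) (k+m-j) * Gc N j m
            * ((N:ℂ)^(tr (k+m)) * Gc N a (k+m)) := by
        rw [Finset.mul_sum]
        apply Finset.sum_congr rfl
        intro m hmem
        have hmj : m ≤ j := by
          have := Finset.mem_range.mp hmem; omega
        rw [Gc_compl N (k+m) j (by omega)]
        rw [Cc]
        have hz : ((j - m : ℕ) : ℤ) = (j:ℤ) - (m:ℤ) := by omega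
        have t3 : ((tr (j-m) : ℕ):ℤ) * 2 = ((j:ℤ)-(m:ℤ)) * (((j:ℤ)-(m:ℤ)) - 1) := by
          rw [trz (j-m), hz]
        have t4 : ((tr (k+m) : ℕ):ℤ) * 2 = ((k:ℤ)+(m:ℤ)) * (((k:ℤ)+(m:ℤ)) - 1) := by
          rw [trz (k+m)]
          push_cast
          ring
        have hexpZ : ((tr j : ℕ):ℤ) + ((tr k : ℕ):ℤ) + ((m:ℤ) * ((k:ℤ) - (j:ℤ)) + (m:ℤ)^2)
            = ((tr (j-m) : ℕ):ℤ) + ((tr (k+m) : ℕ):ℤ) := by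
          apply mul_left_cancel₀ (a := (2:ℤ)) two_ne_zero
          linear_combination trz j + trz k - t3 - t4
        have hpow : (N:ℂ)^(tr j) * (N:ℂ)^(tr k) * (N:ℂ)^((m:ℤ) * ((k:ℤ) - (j:ℤ)) + (m:ℤ)^2)
            = (N:ℂ)^(tr (j-m)) * (N:ℂ)^(tr (k+m)) := by
          rw [← zpow_natCast (N:ℂ) (tr j), ← zpow_natCast (N:ℂ) (tr k),
            ← zpow_natCast (N:ℂ) (tr (j-m)), ← zpow_natCast (N:ℂ) (tr (k+m)),
            ← zpow_add₀ hq, ← zpow_add₀ hq, ← zpow_add₀ hq, hexpZ]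
        linear_combination (Gc N (k+m) j * Gc N j m * Gc N a (k+m)) * hpow

section Analytic
set_option linter.unusedSectionVars false

variable {n : ℕ}

/-- the linear functional `x ↦ (u x)_c`. -/
def ff (u : Matrix (Fin n) (Fin n) F) (c : Fin n) (x : Fin n → F) : F := ∑ t, u c t * x t

/-- the solution space for column index `c`. -/
def Wn (u : Matrix (Fin n) (Fin n) F) (c : ℕ) : Finset (Fin n → F) :=
  Finset.univ.filter (fun x => (∀ i : Fin n, ¬ c < (i:ℕ) → x i = 0) ∧
    ∀ i : Fin n, c < (i:ℕ) → ff u i x = 0)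

lemma mem_Wn {u : Matrix (Fin n) (Fin n) F} {c : ℕ} {x : Fin n → F} :
    x ∈ Wn u c ↔ (∀ i : Fin n, ¬ c < (i:ℕ) → x i = 0) ∧
      (∀ i : Fin n, c < (i:ℕ) → ff u i x = 0) := by
  simp [Wn]

@[simp] lemma ff_zero (u : Matrix (Fin n) (Fin n) F) (c : Fin n) : ff u c 0 = 0 := by
  simp [ff]

lemma ff_add (u : Matrix (Fin n) (Fin n) F) (c : Fin n) (x y : Fin n → F) :
    ff u c (x + y) = ff u c x + ff u c y := by
  simp [ff, mul_add, Finset.sum_add_distrib]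

lemma ff_smul (u : Matrix (Fin n) (Fin n) F) (c : Fin n) (a : F) (x : Fin n → F) :
    ff u c (a • x) = a * ff u c x := by
  simp only [ff, Finset.mul_sum, Pi.smul_apply, smul_eq_mul]
  apply Finset.sum_congr rfl
  intro t _
  ring

lemma Wn_zero_mem (u : Matrix (Fin n) (Fin n) F) (c : ℕ) : (0 : Fin n → F) ∈ Wn u c := by
  rw [mem_Wn]
  exact ⟨fun i _ => rfl, fun i _ => ff_zero u i⟩

lemma Wn_add {u : Matrix (Fin n) (Fin n) F} {c : ℕ} {x y : Fin n → F}
    (hx : x ∈ Wn u c) (hy : y ∈ Wn u c) : x + y ∈ Wn u c := by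
  rw [mem_Wn] at *
  refine ⟨fun i hi => ?_, fun i hi => ?_⟩
  · simp [hx.1 i hi, hy.1 i hi]
  · rw [ff_add, hx.2 i hi, hy.2 i hi, add_zero]

lemma Wn_sub {u : Matrix (Fin n) (Fin n) F} {c : ℕ} {x y : Fin n → F}
    (hx : x ∈ Wn u c) (hy : y ∈ Wn u c) : x - y ∈ Wn u c := by
  rw [mem_Wn] at *
  refine ⟨fun i hi => ?_, fun i hi => ?_⟩
  · simp [Pi.sub_apply, hx.1 i hi, hy.1 i hi]
  · have : x - y = x + (-1 : F) • y := by funext t; simp; ring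
    rw [this, ff_add, ff_smul, hx.2 i hi, hy.2 i hi]
    ring

lemma Wn_smul {u : Matrix (Fin n) (Fin n) F} {c : ℕ} (a : F) {x : Fin n → F}
    (hx : x ∈ Wn u c) : a • x ∈ Wn u c := by
  rw [mem_Wn] at *
  refine ⟨fun i hi => ?_, fun i hi => ?_⟩
  · simp [hx.1 i hi]
  · rw [ff_smul, hx.2 i hi, mul_zero]

lemma theta_prod {θ : F → ℂ} (hθadd : ∀ x y, θ (x + y) = θ x * θ y) (hθ0 : θ 0 = 1)
    {ι : Type*} (s : Finset ι) (f : ι → F) :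
    θ (∑ i ∈ s, f i) = ∏ i ∈ s, θ (f i) := by
  induction s using Finset.cons_induction with
  | empty => simpa using hθ0
  | cons a s ha ih =>
    rw [Finset.sum_cons, Finset.prod_cons, hθadd, ih]

lemma mulv (A v : Matrix (Fin n) (Fin n) F) (i j : Fin n) :
    (A * v) i j = ff A i (fun t => v t j) := by
  simp [Matrix.mul_apply, ff]

lemma trace_mul_eq (u v : Matrix (Fin n) (Fin n) F) :
    Matrix.trace (u * v) = ∑ c, ff u c (fun t => v t c) := by
  simp [Matrix.trace, Matrix.diag, Matrix.mul_apply, ff]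


lemma mem_filter_iff (θ : F → ℂ) (g : Matrix (Fin n) (Fin n) F)
    (K : Finset (Fin n)) (v : Matrix (Fin n) (Fin n) F) :
    ((∀ i j, ¬ j < i → v i j = 0) ∧ (∀ i j, v i j ≠ 0 → j ∈ K) ∧ lowerPart (g * v) = v)
    ↔ ∀ c : Fin n, (fun r => v r c) ∈
        (if c ∈ K then Wn (g - 1) (c:ℕ) else ({0} : Finset (Fin n → F))) := by
  constructor
  · rintro ⟨h1, h2, h3⟩ c
    by_cases hc : c ∈ K
    · rw [if_pos hc, mem_Wn]
      constructor
      · intro i hi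
        exact h1 i c (by rwa [Fin.lt_def])
      · intro i hi
        have hci : c < i := by rwa [Fin.lt_def]
        have h4 : (g * v) i c = v i c := by
          have := congrFun (congrFun h3 i) c
          rwa [lowerPart, Matrix.of_apply, if_pos hci] at this
        have h5 : ((g - 1) * v) i c = 0 := by
          rw [Matrix.sub_mul, Matrix.one_mul, Matrix.sub_apply, h4, sub_self]
        rw [← mulv]
        exact h5
    · rw [if_neg hc, Finset.mem_singleton]
      funext r
      by_contra hne
      exact hc (h2 r c hne)
  · intro h
    have hcol : ∀ c : Fin n, c ∉ K → (fun r => v r c) = 0 := by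
      intro c hc
      have := h c
      rwa [if_neg hc, Finset.mem_singleton] at this
    have hcolK : ∀ c : Fin n, c ∈ K → (fun r => v r c) ∈ Wn (g - 1) (c:ℕ) := by
      intro c hc
      have := h c
      rwa [if_pos hc] at this
    have h1 : ∀ i j, ¬ j < i → v i j = 0 := by
      intro i j hij
      by_cases hj : j ∈ K
      · exact (mem_Wn.mp (hcolK j hj)).1 i (by rwa [Fin.lt_def] at hij)
      · exact congrFun (hcol j hj) i
    refine ⟨h1, ?_, ?_⟩
    · intro i j hne
      by_contra hj
      exact hne (congrFun (hcol j hj) i)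
    · funext i j
      rw [lowerPart, Matrix.of_apply]
      by_cases hij : j < i
      · rw [if_pos hij]
        have h5 : ((g - 1) * v) i j = 0 := by
          rw [mulv]
          by_cases hj : j ∈ K
          · exact (mem_Wn.mp (hcolK j hj)).2 i (by rwa [Fin.lt_def] at hij)
          · rw [hcol j hj]
            exact ff_zero _ i
        have := h5
        rw [Matrix.sub_mul, Matrix.one_mul, Matrix.sub_apply, sub_eq_zero] at this
        exact this
      · rw [if_neg hij]
        exact (h1 i j hij).symm

open Classical in
lemma Psi_factor (θ : F → ℂ) (hθadd : ∀ x y, θ (x + y) = θ x * θ y) (hθ0 : θ 0 = 1)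
    (g : Matrix (Fin n) (Fin n) F) (K : Finset (Fin n)) :
    Psi θ K g = ∏ c ∈ K, ∑ x ∈ Wn (g - 1) (c:ℕ), θ (ff (g - 1) c x) := by
  have step1 : ∏ c ∈ K, (∑ x ∈ Wn (g - 1) (c:ℕ), θ (ff (g - 1) c x))
      = ∏ c : Fin n, ∑ x ∈ (if c ∈ K then Wn (g - 1) (c:ℕ) else ({0} : Finset (Fin n → F))),
          θ (ff (g - 1) c x) := by
    rw [Finset.prod_congr rfl (fun c (hc : c ∈ K) => by rw [if_pos hc] :
      ∀ c ∈ K, (∑ x ∈ Wn (g - 1) (c:ℕ), θ (ff (g - 1) c x))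
        = ∑ x ∈ (if c ∈ K then Wn (g - 1) (c:ℕ) else ({0} : Finset (Fin n → F))),
            θ (ff (g - 1) c x))]
    apply Finset.prod_subset (Finset.subset_univ K)
    intro c _ hc
    rw [if_neg hc, Finset.sum_singleton, ff_zero, hθ0]
  rw [step1, Finset.prod_univ_sum]
  rw [Psi]
  apply Finset.sum_nbij' (i := fun v => fun c r => v r c)
    (j := fun p => Matrix.of fun r c => p c r)
  · intro v hv
    rw [Fintype.mem_piFinset]
    have := (Finset.mem_filter.mp hv).2
    exact (mem_filter_iff θ g K v).mp this
  · intro p hp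
    refine Finset.mem_filter.mpr ⟨Finset.mem_univ _, ?_⟩
    apply (mem_filter_iff θ g K _).mpr
    intro c
    have := Fintype.mem_piFinset.mp hp c
    exact this
  · intro v _
    rfl
  · intro p _
    rfl
  · intro v _
    rw [trace_mul_eq, theta_prod hθadd hθ0]

lemma ff_sub (u : Matrix (Fin n) (Fin n) F) (c : Fin n) (x y : Fin n → F) :
    ff u c (x - y) = ff u c x - ff u c y := by
  simp [ff, mul_sub, Finset.sum_sub_distrib]

def Aset (u : Matrix (Fin n) (Fin n) F) : Finset (Fin n) :=
  univ.filter (fun c => ∀ x ∈ Wn u (c:ℕ), ff u c x = 0)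

lemma S_of_mem (θ : F → ℂ) (hθ0 : θ 0 = 1) (u : Matrix (Fin n) (Fin n) F)
    (c : Fin n) (hc : c ∈ Aset u) :
    ∑ x ∈ Wn u (c:ℕ), θ (ff u c x) = ((Wn u (c:ℕ)).card : ℂ) := by
  have hall := (Finset.mem_filter.mp hc).2
  rw [Finset.sum_congr rfl (fun x hx => by rw [hall x hx, hθ0] :
    ∀ x ∈ Wn u (c:ℕ), θ (ff u c x) = 1)]
  simp

lemma S_of_not_mem (θ : F → ℂ) (hθadd : ∀ x y, θ (x + y) = θ x * θ y)
    (u : Matrix (Fin n) (Fin n) F) (c : Fin n) (hc : c ∉ Aset u)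
    (hne : ∃ s0, θ s0 ≠ 1) :
    ∑ x ∈ Wn u (c:ℕ), θ (ff u c x) = 0 := by
  obtain ⟨s0, hs0⟩ := hne
  have hex : ∃ x ∈ Wn u (c:ℕ), ff u c x ≠ 0 := by
    by_contra hno
    push_neg at hno
    exact hc (Finset.mem_filter.mpr ⟨Finset.mem_univ _, hno⟩)
  obtain ⟨x0, hx0m, hx0ne⟩ := hex
  set y := (s0 * (ff u c x0)⁻¹) • x0 with hydef
  have hy : y ∈ Wn u (c:ℕ) := Wn_smul _ hx0m
  have hfy : ff u c y = s0 := by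
    rw [hydef, ff_smul]
    field_simp
  have htrans : ∑ x ∈ Wn u (c:ℕ), θ (ff u c x)
      = ∑ x ∈ Wn u (c:ℕ), θ (ff u c (x + y)) := by
    apply Finset.sum_nbij' (i := fun x => x - y) (j := fun x => x + y)
    · intro a ha; exact Wn_sub ha hy
    · intro a ha; exact Wn_add ha hy
    · intro a _; simp
    · intro a _; simp
    · intro a _; rw [sub_add_cancel]
  have hsplit : ∑ x ∈ Wn u (c:ℕ), θ (ff u c (x + y))
      = θ s0 * ∑ x ∈ Wn u (c:ℕ), θ (ff u c x) := by
    rw [Finset.mul_sum]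
    apply Finset.sum_congr rfl
    intro x _
    rw [ff_add, hfy, hθadd]
    ring
  have : (1 - θ s0) * ∑ x ∈ Wn u (c:ℕ), θ (ff u c x) = 0 := by
    rw [htrans] at hsplit ⊢
    linear_combination hsplit
  rcases mul_eq_zero.mp this with h | h
  · exact absurd (by linear_combination -h) hs0
  · exact h

lemma ff_update (u : Matrix (Fin n) (Fin n) F) (i i0 : Fin n) (x : Fin n → F) (a : F) :
    ff u i (Function.update x i0 a) = ff u i x - u i i0 * x i0 + u i i0 * a := by
  unfold ff
  rw [← Finset.add_sum_erase Finset.univ _ (Finset.mem_univ i0),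
    ← Finset.add_sum_erase Finset.univ (fun t => u i t * x t) (Finset.mem_univ i0)]
  rw [Finset.sum_congr rfl (fun t ht => by
    rw [Function.update_of_ne (Finset.ne_of_mem_erase ht)] :
    ∀ t ∈ Finset.univ.erase i0, u i t * (Function.update x i0 a) t = u i t * x t)]
  rw [Function.update_self]
  ring

lemma Wn_top (u : Matrix (Fin n) (Fin n) F) (c : ℕ) (h : n ≤ c + 1) :
    Wn u c = {0} := by
  ext x
  rw [mem_Wn, Finset.mem_singleton]
  constructor
  · intro ⟨h1, _⟩
    funext i
    exact h1 i (by omega)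
  · rintro rfl
    exact (mem_Wn.mp (Wn_zero_mem u c))

lemma card_W_rec (u : Matrix (Fin n) (Fin n) F) (hu : ∀ a b : Fin n, ¬ a < b → u a b = 0)
    (c : ℕ) (h : c + 1 < n) :
    (Wn u c).card
      = Fintype.card F * ((Wn u (c+1)).filter (fun x => ff u ⟨c+1, h⟩ x = 0)).card := by
  set i0 : Fin n := ⟨c+1, h⟩ with hi0
  have hu00 : u i0 i0 = 0 := hu i0 i0 (lt_irrefl i0)
  have hcard : (Wn u c).card
      = ((Finset.univ : Finset F) ×ˢ
          ((Wn u (c+1)).filter (fun x => ff u i0 x = 0))).card := by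
    apply Finset.card_nbij' (i := fun x => (x i0, Function.update x i0 0))
      (j := fun p => Function.update p.2 i0 p.1)
    · intro x hx
      rw [Finset.mem_coe, mem_Wn] at hx
      rw [Finset.mem_coe, Finset.mem_product, Finset.mem_filter, mem_Wn]
      dsimp only
      refine ⟨Finset.mem_univ _, ⟨⟨?_, ?_⟩, ?_⟩⟩
      · intro i hi
        by_cases hii : i = i0
        · subst hii; rw [Function.update_self]
        · rw [Function.update_of_ne hii]
          apply hx.1 i
          have : (i:ℕ) ≠ c + 1 := fun hv => hii (Fin.ext hv)
          omega
      · intro i hi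
        rw [ff_update]
        have hui : u i i0 = 0 := by
          apply hu
          rw [Fin.lt_def]
          simp only [hi0]
          omega
        rw [hui, hx.2 i (by omega)]
        ring
      · rw [ff_update, hu00, hx.2 i0 (by simp [hi0])]
        ring
    · intro p hp
      rw [Finset.mem_coe, Finset.mem_product, Finset.mem_filter, mem_Wn] at hp
      obtain ⟨_, ⟨⟨hs, hf⟩, hf0⟩⟩ := hp
      rw [Finset.mem_coe, mem_Wn]
      constructor
      · intro i hi
        dsimp only
        rw [Function.update_of_ne]
        · apply hs i; omega
        · intro hii
          rw [hii] at hi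
          simp [hi0] at hi
      · intro i hi
        rw [ff_update]
        by_cases hii : i = i0
        · subst hii
          rw [hu00, hs i0 (by simp [hi0]), hf0]
          ring
        · have hvi : (i:ℕ) ≠ c + 1 := fun hv => hii (Fin.ext hv)
          have hui : u i i0 = 0 := by
            apply hu
            rw [Fin.lt_def]
            simp only [hi0]
            omega
          rw [hui, hf i (by omega)]
          ring
    · intro x hx
      dsimp only
      funext i
      by_cases hii : i = i0
      · subst hii; rw [Function.update_self]
      · rw [Function.update_of_ne hii, Function.update_of_ne hii]
    · rintro ⟨a, x2⟩ hp
      rw [Finset.mem_coe, Finset.mem_product, Finset.mem_filter, mem_Wn] at hp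
      obtain ⟨_, ⟨⟨hs, _⟩, _⟩⟩ := hp
      have hz : x2 i0 = 0 := hs i0 (by simp [hi0])
      dsimp only
      rw [Function.update_idem, Function.update_self,
        show Function.update x2 i0 0 = x2 from Function.update_eq_self_iff.mpr hz.symm]
  rw [hcard, Finset.card_product, Finset.card_univ]

lemma card_fiber (u : Matrix (Fin n) (Fin n) F) (i0 : Fin n)
    (hx0 : ∃ x ∈ Wn u (i0:ℕ), ff u i0 x ≠ 0) :
    (Wn u (i0:ℕ)).card
      = Fintype.card F * ((Wn u (i0:ℕ)).filter (fun x => ff u i0 x = 0)).card := by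
  rw [Finset.card_eq_sum_card_fiberwise
    (f := fun x => ff u i0 x) (t := Finset.univ) (fun x _ => Finset.mem_univ _)]
  have hall : ∀ t : F, ((Wn u (i0:ℕ)).filter (fun x => ff u i0 x = t)).card
      = ((Wn u (i0:ℕ)).filter (fun x => ff u i0 x = 0)).card := by
    intro t
    obtain ⟨x0, hx0m, hx0ne⟩ := hx0
    set y := (t * (ff u i0 x0)⁻¹) • x0 with hydef
    have hy : y ∈ Wn u (i0:ℕ) := Wn_smul _ hx0m
    have hfy : ff u i0 y = t := by rw [hydef, ff_smul]; field_simp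
    apply Finset.card_nbij' (i := fun x => x - y) (j := fun x => x + y)
    · intro a ha
      rw [Finset.mem_coe, Finset.mem_filter] at ha ⊢
      exact ⟨Wn_sub ha.1 hy, by rw [ff_sub, ha.2, hfy, sub_self]⟩
    · intro a ha
      rw [Finset.mem_coe, Finset.mem_filter] at ha ⊢
      exact ⟨Wn_add ha.1 hy, by rw [ff_add, ha.2, hfy, zero_add]⟩
    · intro a _; simp
    · intro a _; simp
  rw [Finset.sum_congr rfl (fun t _ => hall t), Finset.sum_const, Finset.card_univ,
    smul_eq_mul]

lemma card_W (u : Matrix (Fin n) (Fin n) F) (hu : ∀ a b : Fin n, ¬ a < b → u a b = 0) :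
    ∀ d c : ℕ, n ≤ c + d →
    (Wn u c).card
      = Fintype.card F ^ ((Aset u).filter (fun c' => c < ((c' : Fin n):ℕ))).card := by
  intro d
  induction d with
  | zero =>
    intro c hc
    rw [Wn_top u c (by omega), Finset.card_singleton]
    rw [Finset.filter_false_of_mem (fun c' _ => by
      have := c'.isLt; omega), Finset.card_empty, pow_zero]
  | succ d ih =>
    intro c hc
    by_cases hn1 : n ≤ c + 1
    · rw [Wn_top u c hn1, Finset.card_singleton]
      rw [Finset.filter_false_of_mem (fun c' _ => by
        have := c'.isLt; omega), Finset.card_empty, pow_zero]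
    · push_neg at hn1
      rw [card_W_rec u hu c hn1]
      set i0 : Fin n := ⟨c+1, hn1⟩ with hi0
      have hval : (i0:ℕ) = c + 1 := rfl
      have hIH := ih (c+1) (by omega)
      by_cases hA : i0 ∈ Aset u
      · have hfilter_eq : (Wn u (c+1)).filter (fun x => ff u i0 x = 0) = Wn u (c+1) := by
          apply Finset.filter_true_of_mem
          intro x hx
          exact (Finset.mem_filter.mp hA).2 x hx
        rw [hfilter_eq, hIH]
        have hcount : (Aset u).filter (fun c' => c < ((c' : Fin n):ℕ))
            = insert i0 ((Aset u).filter (fun c' => c+1 < ((c' : Fin n):ℕ))) := by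
          ext c'
          simp only [Finset.mem_filter, Finset.mem_insert]
          constructor
          · rintro ⟨hm, hlt⟩
            by_cases hv : (c':ℕ) = c+1
            · left; exact Fin.ext (by rw [hv, hval])
            · right; exact ⟨hm, by omega⟩
          · rintro (rfl | ⟨hm, hlt⟩)
            · exact ⟨hA, by omega⟩
            · exact ⟨hm, by omega⟩
        rw [hcount, Finset.card_insert_of_notMem (by
          simp only [Finset.mem_filter, hval]
          omega), pow_succ]
        ring
      · have hex : ∃ x ∈ Wn u (c+1), ff u i0 x ≠ 0 := by
          by_contra hno
          push_neg at hno
          exact hA (Finset.mem_filter.mpr ⟨Finset.mem_univ _, hno⟩)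
        have hfib : (Wn u (c+1)).card
            = Fintype.card F * ((Wn u (c+1)).filter (fun x => ff u i0 x = 0)).card :=
          card_fiber u i0 hex
        have hcount : (Aset u).filter (fun c' => c < ((c' : Fin n):ℕ))
            = (Aset u).filter (fun c' => c+1 < ((c' : Fin n):ℕ)) := by
          ext c'
          simp only [Finset.mem_filter]
          constructor
          · rintro ⟨hm, hlt⟩
            refine ⟨hm, ?_⟩
            by_cases hv : (c':ℕ) = c+1
            · exact absurd (show i0 ∈ Aset u from (Fin.ext (by rw [hv, hval]) :
                c' = i0) ▸ hm) hA
            · omega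
          · rintro ⟨hm, hlt⟩
            exact ⟨hm, by omega⟩
        rw [hcount, ← hfib]
        exact hIH

lemma Psik_eq (θ : F → ℂ) (hθadd : ∀ x y, θ (x + y) = θ x * θ y) (hθ0 : θ 0 = 1)
    (hne : ∃ s0, θ s0 ≠ 1) (g : Matrix (Fin n) (Fin n) F)
    (hg : ∀ a b : Fin n, ¬ a < b → (g - 1) a b = 0) (t : ℕ) :
    Psik θ t g = (Fintype.card F : ℂ)^(tr t)
      * Gc (Fintype.card F) (Aset (g - 1)).card t := by
  have hS : ∀ c : Fin n, (∑ x ∈ Wn (g - 1) (c:ℕ), θ (ff (g - 1) c x))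
      = if c ∈ Aset (g - 1)
          then ((Fintype.card F : ℂ))^(((Aset (g - 1)).filter (fun x => c < x)).card)
          else 0 := by
    intro c
    by_cases hc : c ∈ Aset (g - 1)
    · rw [if_pos hc, S_of_mem θ hθ0 (g - 1) c hc]
      have hcw := card_W (g - 1) hg (n - (c:ℕ)) (c:ℕ) (by omega)
      have hfeq : (Aset (g - 1)).filter (fun c' => (c:ℕ) < ((c' : Fin n):ℕ))
          = (Aset (g - 1)).filter (fun x => c < x) := by
        apply Finset.filter_congr
        intro c' _
        rw [Fin.lt_def]
      rw [hcw, hfeq]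
      push_cast
      rfl
    · rw [if_neg hc, S_of_not_mem θ hθadd (g - 1) c hc hne]
  rw [Psik]
  rw [Finset.sum_congr rfl (fun K _ => Psi_factor θ hθadd hθ0 g K)]
  rw [← weight_sum (Fintype.card F) (Aset (g - 1)) t]
  rw [← Finset.sum_subset
    (Finset.powersetCard_mono (Finset.subset_univ (Aset (g - 1))) (n := t))
    (by
      intro K hK hKn
      have hKsub : ¬ K ⊆ Aset (g - 1) := by
        intro hsub
        exact hKn (Finset.mem_powersetCard.mpr ⟨hsub, (Finset.mem_powersetCard.mp hK).2⟩)
      obtain ⟨c, hcK, hcA⟩ := Finset.not_subset.mp hKsub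
      apply Finset.prod_eq_zero hcK
      rw [hS c, if_neg hcA])]
  apply Finset.sum_congr rfl
  intro K hK
  have hKsub : K ⊆ Aset (g - 1) := (Finset.mem_powersetCard.mp hK).1
  apply Finset.prod_congr rfl
  intro c hc
  rw [hS c, if_pos (hKsub hc)]

end Analytic

theorem stmt11 (n : ℕ) (θ : F → ℂ) (hθadd : ∀ x y, θ (x + y) = θ x * θ y)
    (hθne : ∃ x, θ x ≠ 1) (j k : ℕ) (hjk : j ≤ k)
    (g : Matrix (Fin n) (Fin n) F) (hg : ∀ a b : Fin n, ¬ a < b → (g - 1) a b = 0) :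
    Psik θ j g * Psik θ k g =
      ∑ m ∈ Finset.range (j + 1),
        (Fintype.card F : ℂ) ^ ((j - m) * (j - m - 1) / 2) *
          (((gaussBinom (k + m) (k + m - j)).eval (Fintype.card F : ℤ) : ℤ) : ℂ) *
          (((gaussBinom j m).eval (Fintype.card F : ℤ) : ℤ) : ℂ) *
          Psik θ (k + m) g := by
  have h00 := hθadd 0 0
  rw [add_zero] at h00
  by_cases h0 : θ 0 = 1
  · -- main case: θ is a genuine additive character
    have hq : ((Fintype.card F : ℕ):ℂ) ≠ 0 := Nat.cast_ne_zero.mpr Fintype.card_ne_zero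
    have hP := Psik_eq θ hθadd h0 hθne g hg
    rw [hP j, hP k]
    rw [Finset.sum_congr rfl (fun m _ => by rw [hP (k+m)] :
      ∀ m ∈ Finset.range (j+1),
        (Fintype.card F : ℂ) ^ ((j - m) * (j - m - 1) / 2) *
          (((gaussBinom (k + m) (k + m - j)).eval (Fintype.card F : ℤ) : ℤ) : ℂ) *
          (((gaussBinom j m).eval (Fintype.card F : ℤ) : ℤ) : ℂ) *
          Psik θ (k + m) g
        = (Fintype.card F : ℂ) ^ ((j - m) * (j - m - 1) / 2) *
          (((gaussBinom (k + m) (k + m - j)).eval (Fintype.card F : ℤ) : ℤ) : ℂ) *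
          (((gaussBinom j m).eval (Fintype.card F : ℤ) : ℤ) : ℂ) *
          ((Fintype.card F : ℂ)^(tr (k+m))
            * Gc (Fintype.card F) (Aset (g - 1)).card (k+m)))]
    exact final_q (Fintype.card F) hq (Aset (g - 1)).card j k hjk
  · -- degenerate case: θ is identically zero
    have hz0 : θ 0 = 0 := by
      have hfac : θ 0 * (1 - θ 0) = 0 := by linear_combination h00
      rcases mul_eq_zero.mp hfac with h | h
      · exact h
      · exact absurd (by linear_combination -h) h0
    have hzero : ∀ x, θ x = 0 := by
      intro x
      have := hθadd x 0
      rw [add_zero] at this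
      rw [this, hz0, mul_zero]
    have hPsik : ∀ t, Psik θ t g = 0 := by
      intro t
      rw [Psik]
      apply Finset.sum_eq_zero
      intro K _
      rw [Psi]
      apply Finset.sum_eq_zero
      intro v _
      exact hzero _
    rw [hPsik j, hPsik k, zero_mul]
    symm
    apply Finset.sum_eq_zero
    intro m _
    rw [hPsik (k+m), mul_zero]
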